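/- arXiv:2601.14088 — 3 statements merged into one kernel-verified Lean document; each statement's English description precedes it below -/
import Mathlib

section
/- There exist absolute constants K₁, K₂ > 0 such that for all natural numbers n, t, t_e with n ≥ 4, t + t_e ≥ 1, and K₁·(t+t_e)·log₂(n)·log₂(log₂ n) ≤ n, there exists a t-breaks t_e-edit-errors resilient code C ⊆ {0,1}^n with log₂|C| ≥ n − K₂·(t+t_e)·log₂(n)·log₂(log₂ n); i.e., there exists such a code of redundancy O((t+t_e)·log n·log log n). -/
/-- Mathlib's former `Levenshtein.Cost` (removed from Mathlib), restored verbatim. -/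
structure Levenshtein.Cost (α β δ : Type*) where
  delete : α → δ
  insert : β → δ
  substitute : α → β → δ

/-- Mathlib's former `Levenshtein.defaultCost`. -/
def Levenshtein.defaultCost {α : Type*} [DecidableEq α] : Levenshtein.Cost α α ℕ where
  delete _ := 1
  insert _ := 1
  substitute a b := if a = b then 0 else 1

/-- Mathlib's former `Levenshtein.impl`. -/
def Levenshtein.impl {α β δ : Type*} [AddZeroClass δ] [Min δ] (C : Levenshtein.Cost α β δ)
    (xs : List α) (y : β) (d : {r : List δ // 0 < r.length}) : {r : List δ // 0 < r.length} :=
  let ⟨ds, w⟩ := d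
  xs.zip (ds.zip ds.tail) |>.foldr
    (init := ⟨[ds.getLast (List.ne_nil_of_length_pos w) + C.insert y], by simp⟩)
    (fun ⟨x, d₀, d₁⟩ ⟨r, w⟩ =>
      ⟨min (C.delete x + r[0]) (min (C.insert y + d₀) (C.substitute x y + d₁)) :: r, by simp⟩)

/-- Mathlib's former `suffixLevenshtein`. -/
def suffixLevenshtein {α β δ : Type*} [AddZeroClass δ] [Min δ] (C : Levenshtein.Cost α β δ)
    (xs : List α) (ys : List β) : {r : List δ // 0 < r.length} :=
  ys.foldr
    (Levenshtein.impl C xs)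
    (xs.foldr (init := ⟨[0], by simp⟩) (fun a ⟨r, w⟩ => ⟨(C.delete a + r[0]) :: r, by simp⟩))

/-- Mathlib's former `levenshtein`. -/
def levenshtein {α β δ : Type*} [AddZeroClass δ] [Min δ] (C : Levenshtein.Cost α β δ)
    (xs : List α) (ys : List β) : δ :=
  let ⟨r, w⟩ := suffixLevenshtein C xs ys
  r[0]

/-- The edit (Levenshtein) distance between two binary words. -/
def editDist (x y : List Bool) : ℕ :=
  levenshtein Levenshtein.defaultCost x y

/-- The `t`-breaks `te`-edit-errors channel output set of a binary word `w`:
multisets of `t+1` nonempty binary words, some ordering of which concatenates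
to a word within edit distance `te` of `w`. -/
def BreakEdit (t te : ℕ) (w : List Bool) : Set (Multiset (List Bool)) :=
  { S | Multiset.card S = t + 1 ∧ (∀ f ∈ S, f ≠ []) ∧
      ∃ l : List (List Bool), (l : Multiset (List Bool)) = S ∧ editDist l.flatten w ≤ te }

/-- A code is `t`-breaks `te`-edit-errors resilient if the channel output sets of
distinct codewords are disjoint. -/
def ResilientBE (t te : ℕ) (C : Finset (List Bool)) : Prop :=
  ∀ c ∈ C, ∀ c' ∈ C, c ≠ c' → BreakEdit t te c ∩ BreakEdit t te c' = ∅

section LevLemmas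
variable {α β δ : Type*} [AddZeroClass δ] [Min δ] {C : Levenshtein.Cost α β δ}

theorem Levenshtein.impl_cons' {x : α} {xs : List α} {y : β} {d : δ} {ds : List δ} {w : 0 < (d :: ds).length}
    (w' : 0 < List.length ds) :
    Levenshtein.impl C (x :: xs) y ⟨d :: ds, w⟩ =
      let ⟨r, w⟩ := Levenshtein.impl C xs y ⟨ds, w'⟩
      ⟨min (C.delete x + r[0]) (min (C.insert y + d) (C.substitute x y + ds[0])) :: r, by simp⟩ :=
  match ds, w' with | _ :: _, _ => rfl

theorem Levenshtein.impl_cons_fst_zero' {x : α} {xs : List α} {y : β} {d : δ} {ds : List δ}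
    {w : 0 < (d :: ds).length} (h) (w' : 0 < List.length ds) :
    (Levenshtein.impl C (x :: xs) y ⟨d :: ds, w⟩).1[0]'h =
      let ⟨r, w⟩ := Levenshtein.impl C xs y ⟨ds, w'⟩
      min (C.delete x + r[0]) (min (C.insert y + d) (C.substitute x y + ds[0])) :=
  match ds, w' with | _ :: _, _ => rfl

theorem Levenshtein.impl_length' {xs : List α} {y : β} (d : {r : List δ // 0 < r.length})
    (w : d.1.length = xs.length + 1) :
    (Levenshtein.impl C xs y d).1.length = xs.length + 1 := by
  induction xs generalizing d with
  | nil => rfl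
  | cons x xs ih =>
    dsimp [Levenshtein.impl]
    match d, w with
    | ⟨d₁ :: d₂ :: ds, _⟩, w =>
      dsimp
      congr 1
      exact ih ⟨d₂ :: ds, (by simp)⟩ (by simpa using w)

theorem suffixLevenshtein_length' (xs : List α) (ys : List β) :
    (suffixLevenshtein C xs ys).1.length = xs.length + 1 := by
  induction ys with
  | nil =>
    dsimp [suffixLevenshtein]
    induction xs with
    | nil => rfl
    | cons _ xs ih =>
      simp_all
  | cons y ys ih =>
    dsimp [suffixLevenshtein]
    rw [Levenshtein.impl_length']
    exact ih

theorem suffixLevenshtein_cons₂' (xs : List α) (y : β) (ys : List β) :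
    suffixLevenshtein C xs (y :: ys) = (Levenshtein.impl C xs) y (suffixLevenshtein C xs ys) :=
  rfl

theorem suffixLevenshtein_cons₁_aux' {x y : {r : List δ // 0 < r.length}}
    (w₀ : x.1[0]'x.2 = y.1[0]'y.2) (w : x.1.tail = y.1.tail) : x = y := by
  match x, y with
  | ⟨hx :: tx, _⟩, ⟨hy :: ty, _⟩ => simp_all

theorem suffixLevenshtein_cons₁' (x : α) (xs : List α) (ys : List β) :
    suffixLevenshtein C (x :: xs) ys =
      ⟨levenshtein C (x :: xs) ys :: (suffixLevenshtein C xs ys).1, by simp⟩ := by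
  induction ys with
  | nil => rfl
  | cons y ys ih =>
    apply suffixLevenshtein_cons₁_aux'
    · rfl
    · rw [suffixLevenshtein_cons₂' (x :: xs), ih, Levenshtein.impl_cons']
      · rfl
      · simp [suffixLevenshtein_length']

theorem suffixLevenshtein_cons_cons_fst_get_zero' (x : α) (xs : List α) (y : β) (ys : List β) (w) :
    (suffixLevenshtein C (x :: xs) (y :: ys)).1[0]'w =
      let ⟨dx, _⟩ := suffixLevenshtein C xs (y :: ys)
      let ⟨dy, _⟩ := suffixLevenshtein C (x :: xs) ys
      let ⟨dxy, _⟩ := suffixLevenshtein C xs ys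
      min (C.delete x + dx[0]) (min (C.insert y + dy[0]) (C.substitute x y + dxy[0])) := by
  conv =>
    lhs
    dsimp only [suffixLevenshtein_cons₂']
  simp only [suffixLevenshtein_cons₁']
  rw [Levenshtein.impl_cons_fst_zero']
  rfl

@[simp]
theorem levenshtein_nil_nil' : levenshtein C [] [] = 0 := by
  simp [levenshtein, suffixLevenshtein]

@[simp]
theorem levenshtein_nil_cons' (y : β) (ys : List β) :
    levenshtein C [] (y :: ys) = levenshtein C [] ys + C.insert y := by
  have h := suffixLevenshtein_length' (C := C) [] ys
  show (Levenshtein.impl C [] y (suffixLevenshtein C [] ys)).1[0]'(Levenshtein.impl C [] y (suffixLevenshtein C [] ys)).2 =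
    (suffixLevenshtein C [] ys).1[0]'(suffixLevenshtein C [] ys).2 + C.insert y
  generalize suffixLevenshtein C [] ys = d at h ⊢
  obtain ⟨ds, w⟩ := d
  match ds, w, h with
  | [_], _, _ => rfl

@[simp]
theorem levenshtein_cons_nil' (x : α) (xs : List α) :
    levenshtein C (x :: xs) [] = C.delete x + levenshtein C xs [] :=
  rfl

@[simp]
theorem levenshtein_cons_cons' (x : α) (xs : List α) (y : β) (ys : List β) :
    levenshtein C (x :: xs) (y :: ys) =
      min (C.delete x + levenshtein C xs (y :: ys))
        (min (C.insert y + levenshtein C (x :: xs) ys)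
          (C.substitute x y + levenshtein C xs ys)) :=
  suffixLevenshtein_cons_cons_fst_get_zero' ..

end LevLemmas




lemma editDist_nil_left (y : List Bool) : editDist [] y = y.length := by
  induction y with
  | nil => simp [editDist]
  | cons b ys ih => simp [editDist, Levenshtein.defaultCost] at ih ⊢; omega

lemma editDist_nil_right (x : List Bool) : editDist x [] = x.length := by
  induction x with
  | nil => simp [editDist]
  | cons a xs ih => simp [editDist, Levenshtein.defaultCost] at ih ⊢; omega

lemma editDist_cons_cons (a b : Bool) (xs ys : List Bool) :
    editDist (a::xs) (b::ys) = min (1 + editDist xs (b::ys))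
      (min (1 + editDist (a::xs) ys) ((if a = b then 0 else 1) + editDist xs ys)) := by
  simp [editDist, Levenshtein.defaultCost]

lemma cs_exists (x : List Bool) : ∀ y : List Bool, ∃ z : List Bool, z.Sublist x ∧ z.Sublist y ∧
    x.length ≤ z.length + editDist x y ∧ y.length ≤ z.length + editDist x y := by
  induction x with
  | nil =>
    intro y
    exact ⟨[], List.nil_sublist _, List.nil_sublist _, by simp [editDist_nil_left]⟩
  | cons a xs ihx =>
    intro y
    induction y with
    | nil =>
      exact ⟨[], List.nil_sublist _, List.nil_sublist _, by simp [editDist_nil_right]⟩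
    | cons b ys ihy =>
      have hmin := editDist_cons_cons a b xs ys
      by_cases hab : a = b
      · rw [if_pos hab] at hmin
        have h3 : editDist (a::xs) (b::ys) = 1 + editDist xs (b::ys)
            ∨ editDist (a::xs) (b::ys) = 1 + editDist (a::xs) ys
            ∨ editDist (a::xs) (b::ys) = editDist xs ys := by omega
        rcases h3 with h | h | h
        · obtain ⟨z, hz1, hz2, hl1, hl2⟩ := ihx (b::ys)
          exact ⟨z, hz1.cons a, hz2, by simp at *; omega, by simp at *; omega⟩
        · obtain ⟨z, hz1, hz2, hl1, hl2⟩ := ihy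
          exact ⟨z, hz1, hz2.cons b, by simp at *; omega, by simp at *; omega⟩
        · obtain ⟨z, hz1, hz2, hl1, hl2⟩ := ihx ys
          subst hab
          exact ⟨a :: z, hz1.cons₂ a, hz2.cons₂ a, by simp at *; omega, by simp at *; omega⟩
      · rw [if_neg hab] at hmin
        have h3 : editDist (a::xs) (b::ys) = 1 + editDist xs (b::ys)
            ∨ editDist (a::xs) (b::ys) = 1 + editDist (a::xs) ys
            ∨ editDist (a::xs) (b::ys) = 1 + editDist xs ys := by omega
        rcases h3 with h | h | h
        · obtain ⟨z, hz1, hz2, hl1, hl2⟩ := ihx (b::ys)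
          exact ⟨z, hz1.cons a, hz2, by simp at *; omega, by simp at *; omega⟩
        · obtain ⟨z, hz1, hz2, hl1, hl2⟩ := ihy
          exact ⟨z, hz1, hz2.cons b, by simp at *; omega, by simp at *; omega⟩
        · obtain ⟨z, hz1, hz2, hl1, hl2⟩ := ihx ys
          exact ⟨z, hz1.cons a, hz2.cons b, by simp at *; omega, by simp at *; omega⟩
def delAll (ds : List ℕ) (x : List Bool) : List Bool := ds.foldl (fun w i => w.eraseIdx i) x
def insAll (ps : List (ℕ × Bool)) (x : List Bool) : List Bool := ps.foldl (fun w p => w.insertIdx p.1 p.2) x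

lemma delAll_cons (i : ℕ) (ds : List ℕ) (x : List Bool) : delAll (i :: ds) x = delAll ds (x.eraseIdx i) := rfl
lemma insAll_cons (p : ℕ × Bool) (ps : List (ℕ × Bool)) (x : List Bool) :
    insAll (p :: ps) x = insAll ps (x.insertIdx p.1 p.2) := rfl
lemma delAll_append (ds es : List ℕ) (x : List Bool) : delAll (ds ++ es) x = delAll es (delAll ds x) := by
  simp [delAll, List.foldl_append]
lemma insAll_append (ps qs : List (ℕ × Bool)) (x : List Bool) : insAll (ps ++ qs) x = insAll qs (insAll ps x) := by
  simp [insAll, List.foldl_append]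

lemma delAll_map_succ (ds : List ℕ) (a : Bool) (x : List Bool) :
    delAll (ds.map (· + 1)) (a :: x) = a :: delAll ds x := by
  induction ds generalizing x with
  | nil => rfl
  | cons i ds ih => simp only [List.map_cons, delAll_cons, List.eraseIdx_cons_succ]; exact ih _

lemma insAll_map_succ (ps : List (ℕ × Bool)) (a : Bool) (x : List Bool) :
    insAll (ps.map fun p => (p.1 + 1, p.2)) (a :: x) = a :: insAll ps x := by
  induction ps generalizing x with
  | nil => rfl
  | cons p ps ih =>
    simp only [List.map_cons, insAll_cons, List.insertIdx_succ_cons]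
    exact ih _

lemma exists_del {z x : List Bool} (h : z.Sublist x) :
    ∃ ds : List ℕ, ds.length + z.length = x.length ∧ (∀ i ∈ ds, i < x.length) ∧ delAll ds x = z := by
  induction h with
  | slnil => exact ⟨[], rfl, by simp, rfl⟩
  | @cons z x a h ih =>
    obtain ⟨ds, h1, h2, h3⟩ := ih
    refine ⟨0 :: ds, by simp; omega, ?_, by rw [delAll_cons, List.eraseIdx_cons_zero]; exact h3⟩
    intro i hi
    rcases List.mem_cons.mp hi with rfl | hi
    · simp
    · have := h2 i hi; simp; omega
  | @cons_cons z x a h ih =>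
    obtain ⟨ds, h1, h2, h3⟩ := ih
    refine ⟨ds.map (· + 1), by simp; omega, ?_, by rw [delAll_map_succ, h3]⟩
    intro i hi
    obtain ⟨j, hj, rfl⟩ := List.mem_map.mp hi
    have := h2 j hj; simp; omega

lemma exists_ins {z y : List Bool} (h : z.Sublist y) :
    ∃ ps : List (ℕ × Bool), ps.length + z.length = y.length ∧ (∀ p ∈ ps, p.1 < y.length) ∧ insAll ps z = y := by
  induction h with
  | slnil => exact ⟨[], rfl, by simp, rfl⟩
  | @cons z y b h ih =>
    obtain ⟨ps, h1, h2, h3⟩ := ih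
    refine ⟨ps ++ [(0, b)], by simp; omega, ?_, ?_⟩
    · intro p hp
      rcases List.mem_append.mp hp with hp | hp
      · have := h2 p hp; simp; omega
      · simp at hp; subst hp; simp
    · rw [insAll_append, h3, insAll_cons]; rfl
  | @cons_cons z y b h ih =>
    obtain ⟨ps, h1, h2, h3⟩ := ih
    refine ⟨ps.map (fun p => (p.1 + 1, p.2)), by simp; omega, ?_, by rw [insAll_map_succ, h3]⟩
    intro p hp
    obtain ⟨q, hq, rfl⟩ := List.mem_map.mp hp
    have := h2 q hq; simp; omega

lemma delAll_pad (k P : ℕ) (w : List Bool) (h : w.length ≤ P) : delAll (List.replicate k P) w = w := by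
  induction k with
  | zero => rfl
  | succ k ih => rw [List.replicate_succ, delAll_cons, List.eraseIdx_of_length_le h, ih]

lemma insAll_pad (k P : ℕ) (b : Bool) (w : List Bool) (h : w.length < P) :
    insAll (List.replicate k (P, b)) w = w := by
  induction k with
  | zero => rfl
  | succ k ih => rw [List.replicate_succ, insAll_cons, List.insertIdx_of_length_lt h, ih]

lemma exists_fn {α β : Type} (g : β → α) (m : ℕ) (xs : List α) (hlen : xs.length = m)
    (h : ∀ a ∈ xs, ∃ b, g b = a) : ∃ f : Fin m → β, (List.ofFn f).map g = xs := by
  subst hlen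
  refine ⟨fun i => (h xs[i] (List.getElem_mem i.isLt)).choose, ?_⟩
  rw [List.map_ofFn]
  have : (g ∘ fun i : Fin xs.length => (h xs[i] (List.getElem_mem i.isLt)).choose)
      = fun i : Fin xs.length => xs[i] :=
    funext fun i => (h xs[i] (List.getElem_mem i.isLt)).choose_spec
  rw [this]
  exact List.ofFn_getElem


abbrev Cert (t te N : ℕ) :=
  (Fin te → Fin N) × (Fin te → Fin N × Bool) × (Fin (t+1) → Fin N × Fin N) ×
    (Fin te → Fin N) × (Fin te → Fin N × Bool)

def toL1 {m N : ℕ} (f : Fin m → Fin N) : List ℕ := (List.ofFn f).map Fin.val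
def toL2 {m N : ℕ} (f : Fin m → Fin N × Bool) : List (ℕ × Bool) :=
  (List.ofFn f).map fun p => (p.1.val, p.2)
def toL3 {m N : ℕ} (f : Fin m → Fin N × Fin N) : List (ℕ × ℕ) :=
  (List.ofFn f).map fun p => (p.1.val, p.2.val)

def decode (t te N : ℕ) (c : List Bool) (T : Cert t te N) : List Bool :=
  let w := insAll (toL2 T.2.1) (delAll (toL1 T.1) c)
  let v := (List.map (fun p : ℕ × ℕ => (List.take p.2 (List.drop p.1 w))) (toL3 T.2.2.1)).flatten
  insAll (toL2 T.2.2.2.2) (delAll (toL1 T.2.2.2.1) v)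

lemma exists_cert {n t te : ℕ} {c c' : List Bool} (hc : c.length = n) (hc' : c'.length = n)
    (hR : (BreakEdit t te c ∩ BreakEdit t te c').Nonempty) :
    ∃ T : Cert t te (n + 2*te + 2), decode t te (n + 2*te + 2) c T = c' := by
  set N := n + 2*te + 2 with hN
  obtain ⟨S, hSc, hSc'⟩ := hR
  obtain ⟨hcard, -, l, hl, hle⟩ := hSc
  obtain ⟨-, -, l', hl', hle'⟩ := hSc'
  have hperm : l.Perm l' := Multiset.coe_eq_coe.mp (hl.trans hl'.symm)
  -- stage 1 : from c to w := l.flatten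
  obtain ⟨z, hz1, hz2, hx1, hx2⟩ := cs_exists l.flatten c
  have hzlen : z.length ≤ n := hc ▸ hz2.length_le
  have hwlen : l.flatten.length ≤ n + te := by omega
  obtain ⟨ds₁, hd₁len, hd₁b, hd₁⟩ := exists_del hz2
  obtain ⟨is₁, hi₁len, hi₁b, hi₁⟩ := exists_ins hz1
  have hd₁le : ds₁.length ≤ te := by omega
  have hi₁le : is₁.length ≤ te := by omega
  -- padded scripts
  have hw : insAll (is₁ ++ List.replicate (te - is₁.length) (N - 1, false))
      (delAll (ds₁ ++ List.replicate (te - ds₁.length) (N - 1)) c) = l.flatten := by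
    rw [delAll_append, hd₁, delAll_pad _ _ _ (by omega), insAll_append, hi₁,
      insAll_pad _ _ _ _ (by omega)]
  -- the fragment pointers
  have hinf : ∀ f ∈ l', ∃ s, s ≤ l.flatten.length ∧ (l.flatten.drop s).take f.length = f := by
    intro f hf
    obtain ⟨u, v, huv⟩ := List.infix_of_mem_flatten (hperm.mem_iff.mpr hf)
    refine ⟨u.length, ?_, ?_⟩
    · rw [← huv]; simp
    · rw [← huv, List.append_assoc, List.drop_left' rfl, List.take_left' rfl]
  set g : List Bool → ℕ × ℕ := fun f =>
    if h : ∃ s, s ≤ l.flatten.length ∧ (l.flatten.drop s).take f.length = f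
    then (h.choose, f.length) else (0, 0) with hg
  have hps : (l'.map g).map (fun p : ℕ × ℕ => (List.take p.2 (List.drop p.1 l.flatten))) = l' := by
    rw [List.map_map]
    conv_rhs => rw [← List.map_id l']
    refine List.map_congr_left ?_
    intro f hf
    have hex := hinf f hf
    simp only [Function.comp, hg, dif_pos hex, id]
    exact hex.choose_spec.2
  have hpslen : (l'.map g).length = t + 1 := by
    rw [List.length_map]
    have : Multiset.card (l' : Multiset (List Bool)) = t + 1 := by rw [hl']; exact hcard
    simpa using this
  have hflen' : l'.flatten.length = l.flatten.length := by
    rw [List.length_flatten, List.length_flatten]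
    exact (hperm.map List.length).sum_eq.symm
  have hpsb : ∀ p ∈ l'.map g, p.1 < N ∧ p.2 < N := by
    intro p hp
    obtain ⟨f, hf, rfl⟩ := List.mem_map.mp hp
    have hex := hinf f hf
    have h1 := hex.choose_spec.1
    have h2 : f.length ≤ l'.flatten.length :=
      (List.infix_of_mem_flatten hf).length_le
    simp only [hg, dif_pos hex]
    constructor <;> omega
  -- stage 2 : from l'.flatten to c'
  obtain ⟨z₂, hz₂1, hz₂2, hy1, hy2⟩ := cs_exists l'.flatten c'
  have hz₂len : z₂.length ≤ n := hc' ▸ hz₂2.length_le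
  obtain ⟨ds₂, hd₂len, hd₂b, hd₂⟩ := exists_del hz₂1
  obtain ⟨is₂, hi₂len, hi₂b, hi₂⟩ := exists_ins hz₂2
  have hd₂le : ds₂.length ≤ te := by omega
  have hi₂le : is₂.length ≤ te := by omega
  have hfin : insAll (is₂ ++ List.replicate (te - is₂.length) (N - 1, false))
      (delAll (ds₂ ++ List.replicate (te - ds₂.length) (N - 1)) l'.flatten) = c' := by
    rw [delAll_append, hd₂, delAll_pad _ _ _ (by omega), insAll_append, hi₂,
      insAll_pad _ _ _ _ (by omega)]
  -- now build the functions
  obtain ⟨f₁, hf₁⟩ := exists_fn (Fin.val (n := N)) te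
    (ds₁ ++ List.replicate (te - ds₁.length) (N - 1)) (by simp; omega)
    (by
      intro i hi
      rcases List.mem_append.mp hi with hi | hi
      · exact ⟨⟨i, by have := hd₁b i hi; omega⟩, rfl⟩
      · exact ⟨⟨i, by have := (List.eq_of_mem_replicate hi); omega⟩, rfl⟩)
  obtain ⟨f₂, hf₂⟩ := exists_fn (fun p : Fin N × Bool => (p.1.val, p.2)) te
    (is₁ ++ List.replicate (te - is₁.length) (N - 1, false)) (by simp; omega)
    (by
      intro p hp
      rcases List.mem_append.mp hp with hp | hp
      · exact ⟨(⟨p.1, by have := hi₁b p hp; omega⟩, p.2), rfl⟩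
      · exact ⟨(⟨p.1, by have := (List.eq_of_mem_replicate hp); subst this; simp; omega⟩, p.2), rfl⟩)
  obtain ⟨f₃, hf₃⟩ := exists_fn (fun p : Fin N × Fin N => (p.1.val, p.2.val)) (t + 1)
    (l'.map g) hpslen
    (by
      intro p hp
      have := hpsb p hp
      exact ⟨(⟨p.1, this.1⟩, ⟨p.2, this.2⟩), rfl⟩)
  obtain ⟨f₄, hf₄⟩ := exists_fn (Fin.val (n := N)) te
    (ds₂ ++ List.replicate (te - ds₂.length) (N - 1)) (by simp; omega)
    (by
      intro i hi
      rcases List.mem_append.mp hi with hi | hi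
      · exact ⟨⟨i, by have := hd₂b i hi; omega⟩, rfl⟩
      · exact ⟨⟨i, by have := (List.eq_of_mem_replicate hi); omega⟩, rfl⟩)
  obtain ⟨f₅, hf₅⟩ := exists_fn (fun p : Fin N × Bool => (p.1.val, p.2)) te
    (is₂ ++ List.replicate (te - is₂.length) (N - 1, false)) (by simp; omega)
    (by
      intro p hp
      rcases List.mem_append.mp hp with hp | hp
      · exact ⟨(⟨p.1, by have := hi₂b p hp; omega⟩, p.2), rfl⟩
      · exact ⟨(⟨p.1, by have := (List.eq_of_mem_replicate hp); subst this; simp; omega⟩, p.2), rfl⟩)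
  refine ⟨(f₁, f₂, f₃, f₄, f₅), ?_⟩
  show insAll (toL2 f₅) (delAll (toL1 f₄)
      ((List.map (fun p : ℕ × ℕ => (List.take p.2 (List.drop p.1
        (insAll (toL2 f₂) (delAll (toL1 f₁) c))))) (toL3 f₃)).flatten)) = c'
  rw [toL1, toL2, toL3, toL1, toL2, hf₁, hf₂, hf₃, hf₄, hf₅, hw, hps]
  exact hfin

open Classical in
lemma greedy {α : Type} [DecidableEq α] (R : α → α → Prop) (hsym : ∀ a b, R a b → R b a) (D : ℕ) :
    ∀ Ω : Finset α, (∀ c ∈ Ω, (Ω.filter fun c' => R c c' ∨ c' = c).card ≤ D) →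
    ∃ C : Finset α, C ⊆ Ω ∧ (∀ c ∈ C, ∀ c' ∈ C, c ≠ c' → ¬ R c c') ∧ Ω.card ≤ C.card * D := by
  intro Ω
  induction Ω using Finset.strongInduction with
  | _ Ω ih =>
    intro hD
    rcases Ω.eq_empty_or_nonempty with rfl | ⟨c, hc⟩
    · exact ⟨∅, by simp, by simp, by simp⟩
    · set F := Ω.filter (fun c' => R c c' ∨ c' = c) with hF
      have hFsub : F ⊆ Ω := Finset.filter_subset _ _
      have hcF : c ∈ F := Finset.mem_filter.mpr ⟨hc, Or.inr rfl⟩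
      have hss : Ω \ F ⊂ Ω := Finset.sdiff_ssubset hFsub ⟨c, hcF⟩
      obtain ⟨C', hC'sub, hC'pair, hC'card⟩ := ih (Ω \ F) hss (by
        intro c'' hc''
        refine le_trans (Finset.card_le_card ?_) (hD c'' (Finset.sdiff_subset hc''))
        exact Finset.monotone_filter_left _ Finset.sdiff_subset)
      have hcnot : c ∉ C' := fun h => (Finset.mem_sdiff.mp (hC'sub h)).2 hcF
      refine ⟨insert c C', ?_, ?_, ?_⟩
      · exact Finset.insert_subset hc (hC'sub.trans Finset.sdiff_subset)
      · have key : ∀ x ∈ C', ¬ R c x := by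
          intro x hx hR
          exact (Finset.mem_sdiff.mp (hC'sub hx)).2
            (Finset.mem_filter.mpr ⟨(Finset.mem_sdiff.mp (hC'sub hx)).1, Or.inl hR⟩)
        intro a ha b hb hab
        rcases Finset.mem_insert.mp ha with ha' | ha'
        · rcases Finset.mem_insert.mp hb with hb' | hb'
          · exact absurd (ha'.trans hb'.symm) hab
          · rw [ha']; exact key b hb'
        · rcases Finset.mem_insert.mp hb with hb' | hb'
          · rw [hb']; intro hR; exact key a ha' (hsym _ _ hR)
          · exact hC'pair a ha' b hb' hab
      · rw [Finset.card_insert_of_notMem hcnot]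
        have h1 : (Ω \ F).card + F.card = Ω.card := Finset.card_sdiff_add_card_eq_card hFsub
        have h2 : F.card ≤ D := hD c hc
        have h3 : (C'.card + 1) * D = C'.card * D + D := by ring
        omega

lemma powcollect (M a b : ℕ) : M^a * (M^a * ((M*M)^(b+1) * (M^a * M^a))) = M^(4*a+2*b+2) := by
  simp only [mul_pow, ← pow_add]
  congr 1
  omega


theorem exists_resilient_code_redundancy_log_loglog :
    ∃ K₁ K₂ : ℝ, 0 < K₁ ∧ 0 < K₂ ∧
      ∀ n t te : ℕ, 4 ≤ n → 1 ≤ t + te →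
        K₁ * ((t + te : ℕ) : ℝ) * Real.logb 2 n * Real.logb 2 (Real.logb 2 n) ≤ (n : ℝ) →
        ∃ C : Finset (List Bool),
          (∀ c ∈ C, c.length = n) ∧ ResilientBE t te C ∧
          (n : ℝ) - K₂ * ((t + te : ℕ) : ℝ) * Real.logb 2 n * Real.logb 2 (Real.logb 2 n)
            ≤ Real.logb 2 (C.card : ℝ) := by
  classical
  refine ⟨1, 21, one_pos, by norm_num, ?_⟩
  intro n t te hn4 htte hK
  rw [one_mul] at hK
  set N := n + 2*te + 2 with hNdef
  set D := Fintype.card (Cert t te N) + 1 with hDdef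
  -- real log facts
  have hn4' : (4:ℝ) ≤ (n:ℝ) := by exact_mod_cast hn4
  have hlog4 : Real.logb 2 (4:ℝ) = 2 := by
    rw [show (4:ℝ) = 2^(2:ℕ) by norm_num, Real.logb_pow]; simp [Real.logb_self_eq_one]
  have hlogn : (2:ℝ) ≤ Real.logb 2 (n:ℝ) := by
    calc (2:ℝ) = Real.logb 2 4 := hlog4.symm
      _ ≤ Real.logb 2 (n:ℝ) := Real.logb_le_logb_of_le one_lt_two (by norm_num) hn4'
  have hloglog : (1:ℝ) ≤ Real.logb 2 (Real.logb 2 (n:ℝ)) := by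
    calc (1:ℝ) = Real.logb 2 2 := (Real.logb_self_eq_one one_lt_two).symm
      _ ≤ Real.logb 2 (Real.logb 2 (n:ℝ)) :=
        Real.logb_le_logb_of_le one_lt_two (by norm_num) hlogn
  have htteR : (1:ℝ) ≤ ((t+te:ℕ):ℝ) := by exact_mod_cast htte
  have h2tte : 2*(t+te) ≤ n := by
    have s1 : 2 * ((t+te:ℕ):ℝ) ≤ ((t+te:ℕ):ℝ) * Real.logb 2 (n:ℝ) := by nlinarith
    have s2 : ((t+te:ℕ):ℝ) * Real.logb 2 (n:ℝ)
        ≤ ((t+te:ℕ):ℝ) * Real.logb 2 (n:ℝ) * Real.logb 2 (Real.logb 2 (n:ℝ)) := by nlinarith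
    have goal : ((2*(t+te):ℕ):ℝ) ≤ (n:ℝ) := by push_cast at s1 s2 hK ⊢; linarith
    exact_mod_cast goal
  have hte_n : te ≤ n := by omega
  -- cardinality bound for certificates
  have hcardCert : Fintype.card (Cert t te N)
      = N^te * ((N*2)^te * ((N*N)^(t+1) * (N^te * (N*2)^te))) := by simp [Cert]
  have hNle : 2*N ≤ n^3 := by
    have hA : 7 ≤ 4*n := by omega
    have hB : 7*n ≤ (4*n)*n := Nat.mul_le_mul_right n hA
    have hC4 : 4*n ≤ n*n := Nat.mul_le_mul_right n hn4
    have hC : (4*n)*n ≤ (n*n)*n := Nat.mul_le_mul_right n hC4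
    have hE : 2*N ≤ 7*n := by omega
    calc 2*N ≤ 7*n := hE
      _ ≤ (4*n)*n := hB
      _ ≤ (n*n)*n := hC
      _ = n^3 := by ring
  have hcard_le : Fintype.card (Cert t te N) ≤ (2*N)^(4*te+2*t+2) := by
    rw [hcardCert]
    have e1 : N ≤ 2*N := by omega
    have e3 : N*N ≤ (2*N)*(2*N) := Nat.mul_le_mul e1 e1
    calc N^te * ((N*2)^te * ((N*N)^(t+1) * (N^te * (N*2)^te)))
        ≤ (2*N)^te * ((2*N)^te * (((2*N)*(2*N))^(t+1) * ((2*N)^te * (2*N)^te))) := by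
          refine Nat.mul_le_mul (Nat.pow_le_pow_left e1 _) (Nat.mul_le_mul
            (Nat.pow_le_pow_left (by omega) _) (Nat.mul_le_mul (Nat.pow_le_pow_left e3 _)
            (Nat.mul_le_mul (Nat.pow_le_pow_left e1 _) (Nat.pow_le_pow_left (by omega) _))))
      _ = (2*N)^(4*te+2*t+2) := powcollect (2*N) te t
  have hD_le : D ≤ n^(21*(t+te)) := by
    have hP : 0 < (2*N)^(4*te+2*t+2) := Nat.pow_pos (by omega)
    have h1 : D ≤ (2*N)^(4*te+2*t+2) + 1 := by omega
    have h2 : (2*N)^(4*te+2*t+2) + 1 ≤ 2 * (2*N)^(4*te+2*t+2) := by omega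
    have h3 : 2 * (2*N)^(4*te+2*t+2) ≤ (2*N) * (2*N)^(4*te+2*t+2) :=
      Nat.mul_le_mul (by omega) le_rfl
    have h4 : (2*N) * (2*N)^(4*te+2*t+2) = (2*N)^(4*te+2*t+3) := by ring
    have h5 : (2*N)^(4*te+2*t+3) ≤ (n^3)^(4*te+2*t+3) := Nat.pow_le_pow_left hNle _
    have h6 : (n^3)^(4*te+2*t+3) = n^(3*(4*te+2*t+3)) := by rw [← pow_mul]
    have h7 : n^(3*(4*te+2*t+3)) ≤ n^(21*(t+te)) :=
      Nat.pow_le_pow_right (by omega) (by omega)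
    omega
  -- the ambient set of words
  set Ωn : Finset (List Bool) :=
    (Finset.univ : Finset (Fin n → Bool)).image (fun v => List.ofFn v) with hΩdef
  have hΩcard : Ωn.card = 2^n := by
    rw [hΩdef, Finset.card_image_of_injective _ List.ofFn_injective]
    simp
  have hΩmem : ∀ c ∈ Ωn, c.length = n := by
    intro c hc
    obtain ⟨v, -, rfl⟩ := Finset.mem_image.mp hc
    simp
  set R : List Bool → List Bool → Prop :=
    fun c c' => (BreakEdit t te c ∩ BreakEdit t te c').Nonempty with hRdef
  have hsym : ∀ a b, R a b → R b a := by
    intro a b h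
    show (BreakEdit t te b ∩ BreakEdit t te a).Nonempty
    rw [Set.inter_comm]
    exact h
  -- counting bound
  have hcount : ∀ c ∈ Ωn, (Ωn.filter fun c' => R c c' ∨ c' = c).card ≤ D := by
    intro c hc
    have hsub : (Ωn.filter fun c' => R c c' ∨ c' = c)
        ⊆ insert c (Ωn.filter fun c' => R c c') := by
      intro x hx
      rw [Finset.mem_filter] at hx
      rcases hx.2 with h | h
      · exact Finset.mem_insert_of_mem (Finset.mem_filter.mpr ⟨hx.1, h⟩)
      · exact h ▸ Finset.mem_insert_self _ _
    have h1 : (Ωn.filter fun c' => R c c' ∨ c' = c).card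
        ≤ (Ωn.filter fun c' => R c c').card + 1 :=
      (Finset.card_le_card hsub).trans (Finset.card_insert_le _ _)
    have hNpos : 0 < N := by omega
    have hex : ∀ c' ∈ Ωn.filter (fun c' => R c c'),
        ∃ T : Cert t te N, decode t te N c T = c' := by
      intro c' hc'
      rw [Finset.mem_filter] at hc'
      exact exists_cert (hΩmem c hc) (hΩmem c' hc'.1) hc'.2
    set junk : Cert t te N := (fun _ => ⟨0, hNpos⟩, fun _ => (⟨0, hNpos⟩, false),
      fun _ => (⟨0, hNpos⟩, ⟨0, hNpos⟩), fun _ => ⟨0, hNpos⟩, fun _ => (⟨0, hNpos⟩, false))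
    set Φ : List Bool → Cert t te N := fun c' =>
      if h : ∃ T : Cert t te N, decode t te N c T = c' then h.choose else junk with hΦ
    have hdec : ∀ c' ∈ Ωn.filter (fun c' => R c c'), decode t te N c (Φ c') = c' := by
      intro c' h
      have hh := hex c' h
      rw [hΦ]
      simp only [dif_pos hh]
      exact hh.choose_spec
    have h2 : (Ωn.filter fun c' => R c c').card ≤ Fintype.card (Cert t te N) := by
      rw [← Finset.card_univ]
      exact Finset.card_le_card_of_injOn Φ (fun _ _ => Finset.mem_univ _)
        (fun a ha b hb h => by
          rw [← hdec a ha, ← hdec b hb, h])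
    omega
  obtain ⟨C, hCsub, hCpair, hCcard⟩ := greedy R hsym D Ωn hcount
  refine ⟨C, fun c hc => hΩmem c (hCsub hc), ?_, ?_⟩
  · intro c hc c' hc' hne
    have hnr : ¬ (BreakEdit t te c ∩ BreakEdit t te c').Nonempty := hCpair c hc c' hc' hne
    exact Set.not_nonempty_iff_eq_empty.mp hnr
  · -- log arithmetic
    have hcard2 : 2^n ≤ C.card * D := hΩcard ▸ hCcard
    have hCpos : 0 < C.card := by
      rcases Nat.eq_zero_or_pos C.card with h | h
      · rw [h, zero_mul] at hcard2
        have : 0 < 2^n := Nat.pow_pos (show 0 < 2 by norm_num)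
        omega
      · exact h
    have hDpos : 0 < D := Nat.succ_pos _
    have hCposR : (0:ℝ) < (C.card : ℝ) := by exact_mod_cast hCpos
    have hDposR : (0:ℝ) < (D : ℝ) := by exact_mod_cast hDpos
    have hmain : ((2:ℝ))^n ≤ (C.card : ℝ) * (D:ℝ) := by exact_mod_cast hcard2
    have hlog : (n:ℝ) ≤ Real.logb 2 (C.card : ℝ) + Real.logb 2 (D : ℝ) := by
      have h1 : Real.logb 2 ((2:ℝ)^n) = n := by
        rw [Real.logb_pow]; simp [Real.logb_self_eq_one]
      have h2 := Real.logb_le_logb_of_le one_lt_two (by positivity) hmain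
      rwa [h1, Real.logb_mul hCposR.ne' hDposR.ne'] at h2
    have hlogD : Real.logb 2 (D : ℝ) ≤ 21*((t+te:ℕ):ℝ) * Real.logb 2 (n:ℝ) := by
      have hcast : (D:ℝ) ≤ ((n:ℝ))^(21*(t+te)) := by exact_mod_cast hD_le
      have h3 := Real.logb_le_logb_of_le one_lt_two hDposR hcast
      rw [Real.logb_pow] at h3
      push_cast at h3 ⊢
      linarith
    have hmono : 21*((t+te:ℕ):ℝ) * Real.logb 2 (n:ℝ)
        ≤ 21*((t+te:ℕ):ℝ) * Real.logb 2 (n:ℝ) * Real.logb 2 (Real.logb 2 (n:ℝ)) := by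
      have hXnn : (0:ℝ) ≤ ((t+te:ℕ):ℝ) := by positivity
      have hLnn : (0:ℝ) ≤ Real.logb 2 (n:ℝ) := by linarith
      nlinarith [mul_nonneg (mul_nonneg (show (0:ℝ) ≤ 21 by norm_num) hXnn) hLnn]
    linarith
end

section
/- There exist absolute constants K₁, K₂ > 0 such that for all natural numbers n, t with n ≥ 4, t ≥ 1, and K₁·t·log₂(n)·log₂(log₂ n) ≤ n, there exists a t-breaks resilient code C ⊆ {0,1}^n with log₂|C| ≥ n − K₂·t·log₂(n)·log₂(log₂ n); i.e., there exists such a code of redundancy O(t·log n·log log n). -/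
open scoped Classical

/-- The error-free `t`-breaks channel output set of a binary word `w`:
multisets of `t+1` nonempty binary words, some ordering of which concatenates to `w`. -/
def Break (t : ℕ) (w : List Bool) : Set (Multiset (List Bool)) :=
  { S | Multiset.card S = t + 1 ∧ (∀ f ∈ S, f ≠ []) ∧
      ∃ l : List (List Bool), (l : Multiset (List Bool)) = S ∧ l.flatten = w }

/-- A code is `t`-breaks resilient if the channel output sets of distinct codewords
are disjoint. -/
def ResilientB (t : ℕ) (C : Finset (List Bool)) : Prop :=
  ∀ c ∈ C, ∀ c' ∈ C, c ≠ c' → Break t c ∩ Break t c' = ∅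

/-- Greedy independent set: if every vertex of `A` has at most `N` "neighbours or self"
inside `A`, then `A` contains an independent set `C` with `A.card ≤ N * C.card`. -/
lemma greedy_indep {α : Type*} [DecidableEq α] (R : α → α → Prop)
    (hsymm : ∀ a b, R a b → R b a) (N : ℕ) :
    ∀ A : Finset α, (∀ a ∈ A, (A.filter (fun b => R a b ∨ b = a)).card ≤ N) →
      ∃ C : Finset α, C ⊆ A ∧ (∀ c ∈ C, ∀ c' ∈ C, c ≠ c' → ¬ R c c') ∧
        A.card ≤ N * C.card := by
  intro A
  induction A using Finset.strongInduction with
  | _ A ih =>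
    intro hdeg
    rcases A.eq_empty_or_nonempty with rfl | ⟨a, ha⟩
    · exact ⟨∅, by simp⟩
    · set S := A.filter (fun b => R a b ∨ b = a) with hS
      have haS : a ∈ S := Finset.mem_filter.mpr ⟨ha, Or.inr rfl⟩
      have hsub : A \ S ⊂ A := Finset.sdiff_ssubset (Finset.filter_subset _ _) ⟨a, haS⟩
      obtain ⟨C', hC'sub, hC'ind, hC'card⟩ := ih (A \ S) hsub (fun a' haa => by
        refine le_trans (Finset.card_le_card (fun b hb => ?_)) (hdeg a' (Finset.mem_sdiff.mp haa).1)
        rw [Finset.mem_filter] at hb ⊢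
        exact ⟨(Finset.mem_sdiff.mp hb.1).1, hb.2⟩)
      have haC' : a ∉ C' := fun h => (Finset.mem_sdiff.mp (hC'sub h)).2 haS
      have hnotR : ∀ c ∈ C', ¬ R a c := by
        intro c hc hR
        have := (Finset.mem_sdiff.mp (hC'sub hc)).2
        exact this (Finset.mem_filter.mpr ⟨(Finset.mem_sdiff.mp (hC'sub hc)).1, Or.inl hR⟩)
      refine ⟨insert a C', ?_, ?_, ?_⟩
      · intro x hx
        rcases Finset.mem_insert.mp hx with rfl | hx
        · exact ha
        · exact (Finset.mem_sdiff.mp (hC'sub hx)).1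
      · intro c hc c' hc' hne
        rcases Finset.mem_insert.mp hc with heq | hcC
        · subst heq
          rcases Finset.mem_insert.mp hc' with heq' | hc'C
          · exact absurd heq'.symm hne
          · exact hnotR c' hc'C
        · rcases Finset.mem_insert.mp hc' with heq' | hc'C
          · subst heq'
            exact fun hR => hnotR c hcC (hsymm _ _ hR)
          · exact hC'ind c hcC c' hc'C hne
      · have h1 : (A \ S).card + S.card = A.card :=
          Finset.card_sdiff_add_card_eq_card (Finset.filter_subset _ _)
        have h2 : S.card ≤ N := hdeg a ha
        rw [Finset.card_insert_of_notMem haC', Nat.mul_add, Nat.mul_one]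
        omega

/-- If `w'` is confusable with `w` through the `t`-breaks channel, then `w'` is the
concatenation of `t+1` infixes of `w`. -/
lemma exists_ofFn_of_confusable {t : ℕ} {w w' : List Bool}
    (h : (Break t w ∩ Break t w').Nonempty) :
    ∃ f : Fin (t + 1) → List Bool, (∀ i, f i <:+: w) ∧ (List.ofFn f).flatten = w' := by
  obtain ⟨S, hSw, hSw'⟩ := h
  obtain ⟨hcard, -, l, hl, hlw⟩ := hSw
  obtain ⟨-, -, l', hl', hlw'⟩ := hSw'
  have hperm : l'.Perm l := Multiset.coe_eq_coe.mp (hl'.trans hl.symm)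
  have hlen : l'.length = t + 1 := by rw [← Multiset.coe_card, hl', hcard]
  have hex : ∃ f : Fin l'.length → List Bool, List.ofFn f = l' := ⟨l'.get, List.ofFn_get l'⟩
  rw [hlen] at hex
  obtain ⟨f, hf⟩ := hex
  refine ⟨f, ?_, by rw [hf, hlw']⟩
  intro i
  have hmem : f i ∈ l' := by
    rw [← hf]
    exact List.mem_ofFn.mpr ⟨i, rfl⟩
  exact hlw ▸ List.infix_of_mem_flatten (hperm.mem_iff.mp hmem)

/-- Counting: the number of words confusable with a fixed word `w` of length `n`
(within any finset `A`, allowing `w` itself) is at most `(n+1)^(2t+3)`. -/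
lemma filter_conf_card_le (t n : ℕ) (hn : 1 ≤ n) (A : Finset (List Bool))
    (w : List Bool) (hw : w.length = n) :
    (A.filter (fun w' => (Break t w ∩ Break t w').Nonempty ∨ w' = w)).card
      ≤ (n + 1) ^ (2 * t + 3) := by
  set I : Finset (List Bool) := (w.tails.flatMap List.inits).toFinset with hI
  have hIcard : I.card ≤ (n + 1) * (n + 1) := by
    refine le_trans (List.toFinset_card_le _) ?_
    rw [List.length_flatMap]
    refine le_trans (List.sum_le_card_nsmul _ (n + 1) ?_) ?_
    · intro x hx
      obtain ⟨p, hp, rfl⟩ := List.mem_map.mp hx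
      have hple : p.length ≤ n := hw ▸ ((List.mem_tails _ _).mp hp).length_le
      simp only [Function.comp, List.length_inits]
      omega
    · simp [List.length_tails, hw, smul_eq_mul]
  have hImem : ∀ u, u <:+: w → u ∈ I := by
    intro u hu
    obtain ⟨p, hup, hpw⟩ := List.infix_iff_prefix_suffix.mp hu
    rw [hI, List.mem_toFinset, List.mem_flatMap]
    exact ⟨p, (List.mem_tails _ _).mpr hpw, (List.mem_inits _ _).mpr hup⟩
  have hsubset : A.filter (fun w' => (Break t w ∩ Break t w').Nonempty ∨ w' = w)
      ⊆ insert w (Finset.image (fun f : Fin (t + 1) → List Bool => (List.ofFn f).flatten)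
        (Fintype.piFinset fun _ => I)) := by
    intro w' hw'
    rw [Finset.mem_filter] at hw'
    rcases hw'.2 with h | rfl
    · apply Finset.mem_insert_of_mem
      obtain ⟨f, hfi, hff⟩ := exists_ofFn_of_confusable h
      exact Finset.mem_image.mpr ⟨f, Fintype.mem_piFinset.mpr (fun i => hImem _ (hfi i)), hff⟩
    · exact Finset.mem_insert_self _ _
  refine le_trans (Finset.card_le_card hsubset) ?_
  · refine le_trans (Finset.card_insert_le _ _) ?_
    have h1 : (Finset.image (fun f : Fin (t + 1) → List Bool => (List.ofFn f).flatten)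
        (Fintype.piFinset fun _ => I)).card ≤ I.card ^ (t + 1) := by
      refine le_trans (Finset.card_image_le) ?_
      rw [Fintype.card_piFinset]
      simp
    have h2 : I.card ^ (t + 1) ≤ ((n + 1) * (n + 1)) ^ (t + 1) :=
      Nat.pow_le_pow_left hIcard _
    have h3 : ((n + 1) * (n + 1)) ^ (t + 1) = (n + 1) ^ (2 * t + 2) := by
      rw [← pow_two, ← pow_mul]; ring_nf
    have h4 : 1 ≤ (n + 1) ^ (2 * t + 2) := Nat.one_le_pow _ _ (by omega)
    have h5 : (n + 1) ^ (2 * t + 3) = (n + 1) ^ (2 * t + 2) * (n + 1) := by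
      rw [← pow_succ]
    have h6 : 2 ≤ n + 1 := by omega
    calc (Finset.image (fun f : Fin (t + 1) → List Bool => (List.ofFn f).flatten)
            (Fintype.piFinset fun _ => I)).card + 1
        ≤ (n + 1) ^ (2 * t + 2) + 1 := by
          have := le_trans h1 h2; omega
      _ ≤ (n + 1) ^ (2 * t + 2) * (n + 1) := by nlinarith
      _ = (n + 1) ^ (2 * t + 3) := h5.symm

theorem exists_breaks_resilient_code_redundancy_log_loglog :
    ∃ K₁ K₂ : ℝ, 0 < K₁ ∧ 0 < K₂ ∧
      ∀ n t : ℕ, 4 ≤ n → 1 ≤ t →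
        K₁ * (t : ℝ) * Real.logb 2 n * Real.logb 2 (Real.logb 2 n) ≤ (n : ℝ) →
        ∃ C : Finset (List Bool),
          (∀ c ∈ C, c.length = n) ∧ ResilientB t C ∧
          (n : ℝ) - K₂ * (t : ℝ) * Real.logb 2 n * Real.logb 2 (Real.logb 2 n)
            ≤ Real.logb 2 (C.card : ℝ) := by
  refine ⟨1, 10, one_pos, by norm_num, ?_⟩
  intro n t hn ht _
  set A : Finset (List Bool) :=
    Finset.image (fun f : Fin n → Bool => List.ofFn f) Finset.univ with hA
  have hAcard : A.card = 2 ^ n := by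
    rw [hA, Finset.card_image_of_injective _ (fun f g h => List.ofFn_inj.mp h),
      Finset.card_univ, Fintype.card_fun]
    simp
  have hAlen : ∀ c ∈ A, c.length = n := by
    intro c hc
    obtain ⟨f, -, rfl⟩ := Finset.mem_image.mp hc
    simp
  set N : ℕ := (n + 1) ^ (2 * t + 3) with hN
  obtain ⟨C, hCA, hCind, hCcard⟩ :=
    greedy_indep (fun w w' => (Break t w ∩ Break t w').Nonempty)
      (fun a b ⟨S, h1, h2⟩ => ⟨S, h2, h1⟩) N A
      (fun a ha => filter_conf_card_le t n (by omega) A a (hAlen a ha))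
  refine ⟨C, fun c hc => hAlen c (hCA hc), ?_, ?_⟩
  · intro c hc c' hc' hne
    exact Set.not_nonempty_iff_eq_empty.mp (hCind c hc c' hc' hne)
  -- real arithmetic
  have hCpos : 0 < C.card := by
    rcases Nat.eq_zero_or_pos C.card with h0 | h
    · rw [hAcard, h0, Nat.mul_zero] at hCcard
      have : (0:ℕ) < 2 ^ n := by positivity
      omega
    · exact h
  have hkey : (2 : ℝ) ^ n ≤ (N : ℝ) * (C.card : ℝ) := by
    rw [hAcard] at hCcard
    exact_mod_cast hCcard
  have hNpos : (0 : ℝ) < (N : ℝ) := by positivity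
  have hCr : (0 : ℝ) < (C.card : ℝ) := by exact_mod_cast hCpos
  have hlog1 : (n : ℝ) ≤ Real.logb 2 N + Real.logb 2 C.card := by
    have h1 : Real.logb 2 ((2 : ℝ) ^ n) ≤ Real.logb 2 ((N : ℝ) * (C.card : ℝ)) :=
      (Real.logb_le_logb one_lt_two (by positivity) (by positivity)).mpr hkey
    rwa [Real.logb_mul hNpos.ne' hCr.ne', Real.logb_pow, Real.logb_self_eq_one one_lt_two,
      mul_one] at h1
  have hlogN : Real.logb 2 N = (2 * t + 3 : ℝ) * Real.logb 2 (n + 1) := by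
    rw [hN]
    push_cast
    rw [Real.logb_pow]
    push_cast
    ring
  have hnpos : (0 : ℝ) < (n : ℝ) := by positivity
  have hn4 : (4 : ℝ) ≤ (n : ℝ) := by exact_mod_cast hn
  have hL2 : (2 : ℝ) ≤ Real.logb 2 n := by
    have h4 : Real.logb 2 (4 : ℝ) = 2 := by
      rw [show (4 : ℝ) = 2 ^ (2 : ℕ) by norm_num, Real.logb_pow,
        Real.logb_self_eq_one one_lt_two]
      norm_num
    calc (2 : ℝ) = Real.logb 2 4 := h4.symm
      _ ≤ Real.logb 2 n := (Real.logb_le_logb one_lt_two (by norm_num) hnpos).mpr hn4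
  have hLL1 : (1 : ℝ) ≤ Real.logb 2 (Real.logb 2 n) := by
    calc (1 : ℝ) = Real.logb 2 2 := (Real.logb_self_eq_one one_lt_two).symm
      _ ≤ Real.logb 2 (Real.logb 2 n) :=
          (Real.logb_le_logb one_lt_two (by norm_num) (by linarith)).mpr hL2
  have hlogn1 : Real.logb 2 ((n : ℝ) + 1) ≤ 2 * Real.logb 2 n := by
    have hle : ((n : ℝ) + 1) ≤ (n : ℝ) ^ (2 : ℕ) := by nlinarith
    calc Real.logb 2 ((n : ℝ) + 1)
        ≤ Real.logb 2 ((n : ℝ) ^ (2 : ℕ)) :=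
          (Real.logb_le_logb one_lt_two (by positivity) (by positivity)).mpr hle
      _ = 2 * Real.logb 2 n := by rw [Real.logb_pow]; norm_num
  have hlogn1_nonneg : 0 ≤ Real.logb 2 ((n : ℝ) + 1) := by
    calc (0:ℝ) ≤ 2 := by norm_num
      _ ≤ Real.logb 2 n := hL2
      _ ≤ Real.logb 2 ((n:ℝ) + 1) :=
          (Real.logb_le_logb one_lt_two hnpos (by linarith)).mpr (by linarith)
  have ht1 : (1 : ℝ) ≤ (t : ℝ) := by exact_mod_cast ht
  have hNle : Real.logb 2 N ≤ 10 * (t : ℝ) * Real.logb 2 n := by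
    rw [hlogN]
    have h1 : (2 * (t : ℝ) + 3) * Real.logb 2 ((n : ℝ) + 1)
        ≤ (5 * (t : ℝ)) * (2 * Real.logb 2 n) := by
      have ha : (2 * (t : ℝ) + 3) ≤ 5 * (t : ℝ) := by linarith
      have hb : 0 ≤ (2 * (t : ℝ) + 3) := by linarith
      nlinarith
    calc (2 * (t : ℝ) + 3) * Real.logb 2 ((n : ℝ) + 1)
        ≤ (5 * (t : ℝ)) * (2 * Real.logb 2 n) := h1
      _ = 10 * (t : ℝ) * Real.logb 2 n := by ring
  have hfinal : 10 * (t : ℝ) * Real.logb 2 n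
      ≤ 10 * (t : ℝ) * Real.logb 2 n * Real.logb 2 (Real.logb 2 n) := by
    have hpos : 0 ≤ 10 * (t : ℝ) * Real.logb 2 n := by nlinarith
    nlinarith
  linarith
end

section
/- For natural numbers ℓ₁, ℓ₂ with ℓ₁ > ℓ₂, the code C_MU(ℓ₁, ℓ₂) = { 0^{ℓ₁} · 1 · w · 1 : w ∈ {0,1}^{ℓ₂} }, all of whose codewords have length ℓ₁ + ℓ₂ + 2 (where 0^{ℓ₁} denotes a run of ℓ₁ zeros and · denotes concatenation), is a mutually uncorrelated code. -/
/-- A code `C` of constant codeword length `L` is mutually uncorrelated if for every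
pair of (possibly equal) codewords `a, b ∈ C` and every `k` with `1 ≤ k < L`, the
length-`k` prefix of `a` differs from the length-`k` suffix of `b`. -/
def MutuallyUncorrelated (C : Set (List Bool)) (L : ℕ) : Prop :=
  ∀ a ∈ C, ∀ b ∈ C, ∀ k : ℕ, 1 ≤ k → k < L → a.take k ≠ b.drop (L - k)

lemma code_getElem_false (ℓ₁ : ℕ) (w : List Bool) {i : ℕ} (hi : i < ℓ₁) :
    (List.replicate ℓ₁ false ++ [true] ++ w ++ [true])[i]? = some false := by
  rw [List.getElem?_append_left (by simp; omega), List.getElem?_append_left (by simp; omega),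
    List.getElem?_append_left (by simpa using hi), List.getElem?_replicate_of_lt hi]

lemma code_getElem_mid (ℓ₁ : ℕ) (w : List Bool) :
    (List.replicate ℓ₁ false ++ [true] ++ w ++ [true])[ℓ₁]? = some true := by
  rw [List.getElem?_append_left (by simp), List.getElem?_append_left (by simp),
    List.getElem?_append_right (by simp), List.length_replicate, Nat.sub_self]
  rfl

lemma code_getElem_last (ℓ₁ ℓ₂ : ℕ) (w : List Bool) (hw : w.length = ℓ₂) :
    (List.replicate ℓ₁ false ++ [true] ++ w ++ [true])[ℓ₁ + ℓ₂ + 1]? = some true := by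
  rw [List.getElem?_append_right (by simp; omega)]
  have h1 : ℓ₁ + ℓ₂ + 1 - ((List.replicate ℓ₁ false ++ [true]) ++ w).length = 0 := by
    simp; omega
  rw [h1]
  rfl

theorem zeroRun_code_mutually_uncorrelated (ℓ₁ ℓ₂ : ℕ) (h : ℓ₂ < ℓ₁) :
    (∀ c ∈ { c : List Bool | ∃ w : List Bool, w.length = ℓ₂ ∧
        c = List.replicate ℓ₁ false ++ [true] ++ w ++ [true] },
      c.length = ℓ₁ + ℓ₂ + 2) ∧
    MutuallyUncorrelated
      { c : List Bool | ∃ w : List Bool, w.length = ℓ₂ ∧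
        c = List.replicate ℓ₁ false ++ [true] ++ w ++ [true] }
      (ℓ₁ + ℓ₂ + 2) := by
  constructor
  · rintro c ⟨w, hw, rfl⟩
    simp [hw]; omega
  · rintro a ⟨w, hw, rfl⟩ b ⟨v, hv, rfl⟩ k hk1 hk2 heq
    set L := ℓ₁ + ℓ₂ + 2 with hL
    by_cases hc : L - k ≤ ℓ₁
    · -- compare index i = ℓ₁ - (L - k)
      set i := ℓ₁ - (L - k) with hi
      have h1 : i < k := by omega
      have h2 : i < ℓ₁ := by omega
      have e1 : ((List.replicate ℓ₁ false ++ [true] ++ w ++ [true]).take k)[i]? = some false := by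
        rw [List.getElem?_take_of_lt h1, code_getElem_false ℓ₁ w h2]
      have e2 : ((List.replicate ℓ₁ false ++ [true] ++ v ++ [true]).drop (L - k))[i]? = some true := by
        rw [List.getElem?_drop]
        have : L - k + i = ℓ₁ := by omega
        rw [this, code_getElem_mid ℓ₁ v]
      rw [heq, e2] at e1
      exact Bool.noConfusion (Option.some.inj e1)
    · -- then k ≤ ℓ₂ + 1 ≤ ℓ₁; compare index k - 1
      have hk : k ≤ ℓ₁ := by omega
      have e1 : ((List.replicate ℓ₁ false ++ [true] ++ w ++ [true]).take k)[k-1]? = some false := by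
        rw [List.getElem?_take_of_lt (by omega), code_getElem_false ℓ₁ w (by omega)]
      have e2 : ((List.replicate ℓ₁ false ++ [true] ++ v ++ [true]).drop (L - k))[k-1]? = some true := by
        rw [List.getElem?_drop]
        have : L - k + (k - 1) = ℓ₁ + ℓ₂ + 1 := by omega
        rw [this, code_getElem_last ℓ₁ ℓ₂ v hv]
      rw [heq, e2] at e1
      exact Bool.noConfusion (Option.some.inj e1)
end
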